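/- Let n ∈ ℕ, r ∈ ℕ with r ≥ 1, and let f₁,…,f_r and g₁,…,g_r be real-valued functions on ℝ, each n times differentiable. Suppose Σ_{i=1}^r g_i = 0 (identically). Then for every multi-index s = (s₁,…,s_r) of nonnegative integers with s₁+⋯+s_r < n, one has Σ_{k₁+⋯+k_r = n} (n! / (k₁!⋯k_r!)) · Π_{i=1}^r (f_i · g_i^{k_i})^{(s_i)} = 0, where the sum ranges over all r-tuples of nonnegative integers k = (k₁,…,k_r) with |k| = n and h^{(m)} denotes the m-th derivative of h. -/

import Mathlib

open scoped BigOperators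
open Finset

private lemma iterDeriv_cmul (c : ℝ) (h : ℝ → ℝ) (m : ℕ) :
    iteratedDeriv m (fun t => c * h t) = fun t => c * iteratedDeriv m h t := by
  induction m with
  | zero => simp
  | succ m ih =>
    rw [iteratedDeriv_succ, ih, iteratedDeriv_succ]
    funext t
    exact deriv_const_mul_field c

private lemma iterDeriv_affine {m : ℕ} {h : ℝ → ℝ} (hh : ContDiff ℝ (m : WithTop ℕ∞) h)
    (x c : ℝ) :
    iteratedDeriv m (fun t => h (x + c * t)) 0 = c ^ m * iteratedDeriv m h x := by
  have H : ContDiff ℝ (m : WithTop ℕ∞) (fun u => h (x + u)) :=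
    hh.comp (contDiff_const.add contDiff_id)
  have e1 : (fun t => h (x + c * t)) = fun t => (fun u => h (x + u)) (c * t) := rfl
  rw [e1, iteratedDeriv_comp_const_mul H c]
  rw [iteratedDeriv_comp_const_add m h x]
  simp

private lemma iterDeriv_fsum {ι : Type*} (u : Finset ι) (F : ι → ℝ → ℝ) (m : ℕ)
    (hF : ∀ j ∈ u, ContDiff ℝ (m : WithTop ℕ∞) (F j)) (t : ℝ) :
    iteratedDeriv m (fun y => ∑ j ∈ u, F j y) t = ∑ j ∈ u, iteratedDeriv m (F j) t := by
  simp only [iteratedDeriv_eq_iteratedFDeriv]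
  rw [iteratedFDeriv_sum hF]
  simp

private lemma pascal {r m : ℕ} (u : Fin r → ℕ) (hu : ∑ i, u i = m + 1) :
    ∑ j : Fin r, (if u j = 0 then (0:ℝ)
        else (Nat.multinomial univ (Function.update u j (u j - 1)) : ℝ))
      = (Nat.multinomial univ u : ℝ) := by
  have hP : (∏ i, ((u i).factorial : ℝ)) ≠ 0 := by
    apply Finset.prod_ne_zero_iff.mpr
    intro i _
    exact_mod_cast (Nat.factorial_pos (u i)).ne'
  apply mul_right_cancel₀ hP
  rw [Finset.sum_mul]
  have key : ∀ j : Fin r,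
      (if u j = 0 then (0:ℝ)
          else (Nat.multinomial univ (Function.update u j (u j - 1)) : ℝ))
        * ∏ i, ((u i).factorial : ℝ) = (u j : ℝ) * (m.factorial : ℝ) := by
    intro j
    by_cases hj : u j = 0
    · simp [hj]
    · rw [if_neg hj]
      set v := Function.update u j (u j - 1) with hv
      have hsplit : u j + ∑ i ∈ univ.erase j, u i = m + 1 := by
        rw [Finset.add_sum_erase _ u (mem_univ j)]; exact hu
      have hvsum : ∑ i, v i = m := by
        rw [hv, Finset.sum_update_of_mem (mem_univ j)]
        rw [show (univ : Finset (Fin r)) \ {j} = univ.erase j by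
          rw [Finset.erase_eq]]
        omega
      have hprodv : (∏ i, ((u i).factorial : ℝ))
          = (u j : ℝ) * ∏ i, ((v i).factorial : ℝ) := by
        rw [← Finset.mul_prod_erase univ (fun i => ((u i).factorial : ℝ)) (mem_univ j),
            ← Finset.mul_prod_erase univ (fun i => ((v i).factorial : ℝ)) (mem_univ j)]
        have h2 : ∀ i ∈ univ.erase j, ((v i).factorial : ℝ) = ((u i).factorial : ℝ) := by
          intro i hi
          rw [hv, Function.update_of_ne (Finset.mem_erase.mp hi).1]
        rw [Finset.prod_congr rfl h2]
        have h1 : (u j).factorial = u j * (u j - 1).factorial := by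
          obtain ⟨a, ha⟩ := Nat.exists_eq_succ_of_ne_zero hj
          rw [ha]; simp [Nat.factorial_succ]
        have h3 : v j = u j - 1 := by rw [hv, Function.update_self]
        rw [h3, h1]
        push_cast
        ring
      have hmv : (Nat.multinomial univ v : ℝ) * ∏ i, ((v i).factorial : ℝ)
          = (m.factorial : ℝ) := by
        have := Nat.multinomial_spec univ v
        rw [hvsum] at this
        have : ((∏ i, (v i).factorial) * Nat.multinomial univ v : ℕ) = m.factorial := this
        push_cast [← this]
        ring
      rw [hprodv]
      calc (Nat.multinomial univ v : ℝ) * ((u j : ℝ) * ∏ i, ((v i).factorial : ℝ))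
          = (u j : ℝ) * ((Nat.multinomial univ v : ℝ) * ∏ i, ((v i).factorial : ℝ)) := by ring
        _ = (u j : ℝ) * (m.factorial : ℝ) := by rw [hmv]
  rw [Finset.sum_congr rfl (fun j _ => key j)]
  rw [← Finset.sum_mul]
  have hcast : (∑ j : Fin r, (u j : ℝ)) = ((m : ℝ) + 1) := by
    have : ((∑ i, u i : ℕ) : ℝ) = ((m:ℝ) + 1) := by rw [hu]; push_cast; ring
    rw [← this]; push_cast; ring
  rw [hcast]
  have hspec := Nat.multinomial_spec univ u
  rw [hu] at hspec
  have : ((m+1).factorial : ℝ) = (Nat.multinomial univ u : ℝ) * ∏ i, ((u i).factorial : ℝ) := by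
    rw [← hspec]; push_cast; ring
  rw [Nat.factorial_succ] at this
  push_cast at this ⊢
  linarith [this]

private lemma reindex {r m : ℕ} (Q : (Fin r → ℕ) → ℝ) :
    ∑ j : Fin r, ∑ s ∈ piAntidiag (univ : Finset (Fin r)) m,
        (Nat.multinomial univ s : ℝ) * Q (Function.update s j (s j + 1))
      = ∑ u ∈ piAntidiag (univ : Finset (Fin r)) (m + 1),
          (Nat.multinomial univ u : ℝ) * Q u := by
  have hsum_upd : ∀ (s : Fin r → ℕ) (j : Fin r) (b : ℕ),
      univ.sum (Function.update s j b) = b + ∑ i ∈ univ.erase j, s i := by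
    intro s j b
    show ∑ i, Function.update s j b i = _
    rw [Finset.sum_update_of_mem (mem_univ j), Finset.erase_eq]
  have step : ∀ j : Fin r,
      ∑ s ∈ piAntidiag (univ : Finset (Fin r)) m,
          (Nat.multinomial univ s : ℝ) * Q (Function.update s j (s j + 1))
        = ∑ u ∈ (piAntidiag (univ : Finset (Fin r)) (m+1)).filter (fun u => u j ≠ 0),
            (Nat.multinomial univ (Function.update u j (u j - 1)) : ℝ) * Q u := by
    intro j
    refine Finset.sum_bij' (fun s _ => Function.update s j (s j + 1))
      (fun u _ => Function.update u j (u j - 1)) ?_ ?_ ?_ ?_ ?_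
    · intro s hs
      rw [Finset.mem_filter, Finset.mem_piAntidiag]
      rw [Finset.mem_piAntidiag] at hs
      have h1 := hsum_upd s j (s j + 1)
      have h2 : s j + ∑ i ∈ univ.erase j, s i = m := by
        rw [Finset.add_sum_erase _ s (mem_univ j)]; exact hs.1
      refine ⟨⟨by omega, fun i _ => mem_univ i⟩, by simp⟩
    · intro u hu
      rw [Finset.mem_filter, Finset.mem_piAntidiag] at hu
      rw [Finset.mem_piAntidiag]
      have h1 := hsum_upd u j (u j - 1)
      have h2 : u j + ∑ i ∈ univ.erase j, u i = m + 1 := by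
        rw [Finset.add_sum_erase _ u (mem_univ j)]; exact hu.1.1
      have h3 := hu.2
      exact ⟨by omega, fun i _ => mem_univ i⟩
    · intro s _
      rw [Function.update_idem]
      simp [Function.update_eq_self]
    · intro u hu
      rw [Finset.mem_filter] at hu
      have h3 := hu.2
      rw [Function.update_idem]
      have h4 : u j - 1 + 1 = u j := by omega
      rw [Function.update_self, h4, Function.update_eq_self]
    · intro s _
      rw [Function.update_idem, Function.update_self]
      simp [Function.update_eq_self]
  calc ∑ j : Fin r, ∑ s ∈ piAntidiag (univ : Finset (Fin r)) m,
        (Nat.multinomial univ s : ℝ) * Q (Function.update s j (s j + 1))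
      = ∑ j : Fin r, ∑ u ∈ (piAntidiag (univ : Finset (Fin r)) (m+1)).filter (fun u => u j ≠ 0),
          (Nat.multinomial univ (Function.update u j (u j - 1)) : ℝ) * Q u :=
        Finset.sum_congr rfl fun j _ => step j
    _ = ∑ j : Fin r, ∑ u ∈ piAntidiag (univ : Finset (Fin r)) (m+1),
          (if u j = 0 then (0:ℝ)
            else (Nat.multinomial univ (Function.update u j (u j - 1)) : ℝ)) * Q u := by
        refine Finset.sum_congr rfl fun j _ => ?_
        rw [Finset.sum_filter]
        refine Finset.sum_congr rfl fun u _ => ?_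
        by_cases h : u j = 0 <;> simp [h]
    _ = ∑ u ∈ piAntidiag (univ : Finset (Fin r)) (m+1),
          (Nat.multinomial univ u : ℝ) * Q u := by
        rw [Finset.sum_comm]
        refine Finset.sum_congr rfl fun u hu => ?_
        rw [Finset.mem_piAntidiag] at hu
        rw [← Finset.sum_mul, pascal u hu.1]

private lemma multinomial_zero_fun (r : ℕ) :
    Nat.multinomial (univ : Finset (Fin r)) 0 = 1 := by
  have := Nat.multinomial_spec (univ : Finset (Fin r)) 0
  simpa using this

private lemma expand {r : ℕ} (x : ℝ) (c : Fin r → ℝ) :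
    ∀ (m : ℕ) (h : Fin r → ℝ → ℝ), (∀ i, ContDiff ℝ (m : WithTop ℕ∞) (h i)) →
    iteratedDeriv m (fun t => ∏ i, h i (x + c i * t)) 0
      = ∑ u ∈ piAntidiag (univ : Finset (Fin r)) m,
          (Nat.multinomial univ u : ℝ)
            * ∏ i, (c i ^ u i * iteratedDeriv (u i) (h i) x) := by
  intro m
  induction m with
  | zero =>
    intro h hh
    simp [multinomial_zero_fun]
  | succ m ih =>
    intro h hh
    have hh1 : ∀ i, Differentiable ℝ (h i) := fun i =>
      (hh i).differentiable (by simp)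
    have hcast : ∀ i, ContDiff ℝ ((m : WithTop ℕ∞) + 1) (h i) := fun i => by
      exact_mod_cast hh i
    -- compute the derivative of the product
    have hkey : deriv (fun t => ∏ i, h i (x + c i * t))
        = fun t => ∑ j, ∏ i,
            (Function.update h j (fun y => c j * deriv (h j) y)) i (x + c i * t) := by
      funext t
      have hD : ∀ i ∈ (univ : Finset (Fin r)),
          HasDerivAt (fun t => h i (x + c i * t))
            (deriv (h i) (x + c i * t) * c i) t := by
        intro i _
        have h1 : HasDerivAt (fun t : ℝ => x + c i * t) (c i) t := by
          simpa using ((hasDerivAt_id t).const_mul (c i)).const_add x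
        have h2 : HasDerivAt (h i) (deriv (h i) (x + c i * t)) (x + c i * t) :=
          ((hh1 i) _).hasDerivAt
        exact h2.comp t h1
      rw [(HasDerivAt.fun_finsetProd hD).deriv]
      refine Finset.sum_congr rfl fun j _ => ?_
      rw [← Finset.mul_prod_erase univ
        (fun i => (Function.update h j (fun y => c j * deriv (h j) y)) i (x + c i * t))
        (mem_univ j)]
      have herase : ∏ i ∈ univ.erase j,
          (Function.update h j (fun y => c j * deriv (h j) y)) i (x + c i * t)
          = ∏ i ∈ univ.erase j, h i (x + c i * t) :=
        Finset.prod_congr rfl fun i hi => by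
          rw [Function.update_of_ne (Finset.mem_erase.mp hi).1]
      rw [herase, Function.update_self]
      simp only [smul_eq_mul]
      ring
    -- smoothness of updated families
    have hsm : ∀ j i, ContDiff ℝ (m : WithTop ℕ∞)
        ((Function.update h j (fun y => c j * deriv (h j) y)) i) := by
      intro j i
      rcases eq_or_ne i j with rfl | hij
      · rw [Function.update_self]
        have hd : ContDiff ℝ (m : WithTop ℕ∞) (deriv (h i)) :=
          (contDiff_succ_iff_deriv.mp (hcast i)).2.2
        exact contDiff_const.mul hd
      · rw [Function.update_of_ne hij]
        exact (hcast i).of_succ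
    have hG : ∀ j ∈ (univ : Finset (Fin r)), ContDiff ℝ (m : WithTop ℕ∞)
        (fun t => ∏ i, (Function.update h j (fun y => c j * deriv (h j) y)) i (x + c i * t)) := by
      intro j _
      apply contDiff_prod
      intro i _
      exact (hsm j i).comp (contDiff_const.add (contDiff_const.mul contDiff_id))
    rw [iteratedDeriv_succ', hkey]
    rw [iterDeriv_fsum univ
      (fun j => fun t => ∏ i, (Function.update h j (fun y => c j * deriv (h j) y)) i (x + c i * t))
      m hG 0]
    have hprod : ∀ (j : Fin r) (s : Fin r → ℕ),
        ∏ i, (c i ^ s i * iteratedDeriv (s i)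
            ((Function.update h j (fun y => c j * deriv (h j) y)) i) x)
        = ∏ i, (c i ^ (Function.update s j (s j + 1)) i
            * iteratedDeriv ((Function.update s j (s j + 1)) i) (h i) x) := by
      intro j s
      rw [← Finset.mul_prod_erase univ _ (mem_univ j), ← Finset.mul_prod_erase univ _ (mem_univ j)]
      congr 1
      · simp only [Function.update_self, iterDeriv_cmul]
        rw [show iteratedDeriv (s j) (deriv (h j)) x = iteratedDeriv (s j + 1) (h j) x from by
          rw [iteratedDeriv_succ']]
        ring
      · refine Finset.prod_congr rfl fun i hi => ?_
        have hij := (Finset.mem_erase.mp hi).1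
        rw [Function.update_of_ne hij, Function.update_of_ne hij]
    have happ : ∀ j : Fin r,
        iteratedDeriv m (fun t => ∏ i,
          (Function.update h j (fun y => c j * deriv (h j) y)) i (x + c i * t)) 0
        = ∑ s ∈ piAntidiag (univ : Finset (Fin r)) m, (Nat.multinomial univ s : ℝ)
            * ∏ i, (c i ^ (Function.update s j (s j + 1)) i
              * iteratedDeriv ((Function.update s j (s j + 1)) i) (h i) x) := by
      intro j
      rw [ih _ (hsm j)]
      exact Finset.sum_congr rfl fun s _ => by rw [hprod j s]
    calc ∑ j : Fin r, iteratedDeriv m (fun t => ∏ i,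
          (Function.update h j (fun y => c j * deriv (h j) y)) i (x + c i * t)) 0
        = ∑ j : Fin r, ∑ s ∈ piAntidiag (univ : Finset (Fin r)) m,
            (Nat.multinomial univ s : ℝ)
            * ∏ i, (c i ^ (Function.update s j (s j + 1)) i
              * iteratedDeriv ((Function.update s j (s j + 1)) i) (h i) x) :=
          Finset.sum_congr rfl fun j _ => happ j
      _ = ∑ u ∈ piAntidiag (univ : Finset (Fin r)) (m + 1),
            (Nat.multinomial univ u : ℝ)
            * ∏ i, (c i ^ u i * iteratedDeriv (u i) (h i) x) :=
          reindex (fun u => ∏ i, (c i ^ u i * iteratedDeriv (u i) (h i) x))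

private lemma vanish : ∀ (n : ℕ) (A B : ℝ → ℝ), ContDiff ℝ (n : WithTop ℕ∞) A →
    ContDiff ℝ (n : WithTop ℕ∞) B → B 0 = 0 → ∀ m, m < n →
    iteratedDeriv m (fun t => A t * B t ^ n) 0 = 0 := by
  intro n
  induction n with
  | zero => intro A B _ _ _ m hm; exact absurd hm (Nat.not_lt_zero m)
  | succ n ihn =>
    intro A B hA hB hB0 m hm
    have hA' : ContDiff ℝ ((n : WithTop ℕ∞) + 1) A := by exact_mod_cast hA
    have hB' : ContDiff ℝ ((n : WithTop ℕ∞) + 1) B := by exact_mod_cast hB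
    cases m with
    | zero =>
      simp [hB0]
    | succ m =>
      rw [iteratedDeriv_succ']
      have hdA := contDiff_succ_iff_deriv.mp hA'
      have hdB := contDiff_succ_iff_deriv.mp hB'
      have hkey : deriv (fun t => A t * B t ^ (n+1))
          = fun t => (deriv A t * B t + ((n:ℝ)+1) * A t * deriv B t) * B t ^ n := by
        funext t
        have h1 : HasDerivAt A (deriv A t) t := (hdA.1 t).hasDerivAt
        have h2 : HasDerivAt B (deriv B t) t := (hdB.1 t).hasDerivAt
        have h3 : HasDerivAt (fun t => B t ^ (n+1)) (((n:ℝ)+1) * B t ^ n * deriv B t) t := by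
          simpa using h2.fun_pow (n+1)
        rw [(h1.fun_mul h3).deriv]
        ring
      rw [hkey]
      exact ihn (fun t => deriv A t * B t + ((n:ℝ)+1) * A t * deriv B t) B
        (((hdA.2.2).mul (hB'.of_succ)).add
          ((contDiff_const.mul (hA'.of_succ)).mul hdB.2.2))
        hB'.of_succ hB0 m (Nat.lt_of_succ_lt_succ hm)

theorem stmt_1 (n r : ℕ) (hr : 1 ≤ r)
    (f g : Fin r → ℝ → ℝ)
    (hf : ∀ i, ContDiff ℝ (n : ℕ∞) (f i))
    (hg : ∀ i, ContDiff ℝ (n : ℕ∞) (g i))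
    (hsum : ∀ x : ℝ, ∑ i, g i x = 0)
    (s : Fin r → ℕ) (hs : ∑ i, s i < n) (x : ℝ) :
    ∑ k ∈ Finset.Nat.antidiagonalTuple r n,
      (Nat.multinomial Finset.univ k : ℝ) *
        ∏ i, iteratedDeriv (s i) (fun t => f i t * (g i t) ^ (k i)) x
      = 0 := by
  classical
  have hfc : ∀ i, ContDiff ℝ (n : WithTop ℕ∞) (f i) := fun i => by exact_mod_cast hf i
  have hgc : ∀ i, ContDiff ℝ (n : WithTop ℕ∞) (g i) := fun i => by exact_mod_cast hg i
  set m := ∑ i, s i with hm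
  have hmn : (m : WithTop ℕ∞) ≤ (n : WithTop ℕ∞) := by exact_mod_cast hs.le
  have hfg : ∀ (k : Fin r → ℕ) (i : Fin r),
      ContDiff ℝ (n : WithTop ℕ∞) (fun t => f i t * g i t ^ k i) :=
    fun k i => (hfc i).mul ((hgc i).pow _)
  set T : (Fin r → ℕ) → ℝ := fun u =>
    ∑ k ∈ piAntidiag (univ : Finset (Fin r)) n, (Nat.multinomial univ k : ℝ) *
      ∏ i, iteratedDeriv (u i) (fun t => f i t * g i t ^ k i) x with hT
  -- Step 1: the key analytic identity, for every direction c
  have hE : ∀ c : Fin r → ℝ,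
      ∑ u ∈ piAntidiag (univ : Finset (Fin r)) m,
        ((Nat.multinomial univ u : ℝ) * T u) * ∏ i, c i ^ u i = 0 := by
    intro c
    have hPsi : (fun t : ℝ => ∑ k ∈ piAntidiag (univ : Finset (Fin r)) n,
          (Nat.multinomial univ k : ℝ) * ∏ i, (f i (x + c i * t) * g i (x + c i * t) ^ k i))
        = fun t => (∏ i, f i (x + c i * t)) * (∑ i, g i (x + c i * t)) ^ n := by
      funext t
      rw [Finset.sum_pow_eq_sum_piAntidiag univ (fun i => g i (x + c i * t)) n, Finset.mul_sum]
      refine Finset.sum_congr rfl fun k _ => ?_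
      rw [Finset.prod_mul_distrib]
      ring
    have haff : ∀ (h : ℝ → ℝ) i, ContDiff ℝ (n : WithTop ℕ∞) h →
        ContDiff ℝ (n : WithTop ℕ∞) (fun t : ℝ => h (x + c i * t)) := fun h i hh =>
      hh.comp (contDiff_const.add (contDiff_const.mul contDiff_id))
    have hvan : iteratedDeriv m
        (fun t => (∏ i, f i (x + c i * t)) * (∑ i, g i (x + c i * t)) ^ n) 0 = 0 := by
      apply vanish n _ _ _ _ _ m hs
      · exact contDiff_prod fun i _ => haff _ i (hfc i)
      · exact ContDiff.sum fun i _ => haff _ i (hgc i)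
      · simpa using hsum x
    have hsmooth : ∀ k ∈ piAntidiag (univ : Finset (Fin r)) n,
        ContDiff ℝ (m : WithTop ℕ∞) (fun t =>
          (Nat.multinomial univ k : ℝ) * ∏ i, (f i (x + c i * t) * g i (x + c i * t) ^ k i)) := by
      intro k _
      refine (contDiff_const.mul (contDiff_prod fun i _ => ?_)).of_le hmn
      exact haff _ i (hfg k i)
    have hexp : iteratedDeriv m (fun t => ∑ k ∈ piAntidiag (univ : Finset (Fin r)) n,
        (Nat.multinomial univ k : ℝ) * ∏ i, (f i (x + c i * t) * g i (x + c i * t) ^ k i)) 0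
      = ∑ k ∈ piAntidiag (univ : Finset (Fin r)) n, (Nat.multinomial univ k : ℝ) *
          ∑ u ∈ piAntidiag (univ : Finset (Fin r)) m, (Nat.multinomial univ u : ℝ) *
            ∏ i, (c i ^ u i * iteratedDeriv (u i) (fun t => f i t * g i t ^ k i) x) := by
      rw [iterDeriv_fsum (piAntidiag (univ : Finset (Fin r)) n)
        (fun k => fun t =>
          (Nat.multinomial univ k : ℝ) * ∏ i, (f i (x + c i * t) * g i (x + c i * t) ^ k i))
        m hsmooth 0]
      refine Finset.sum_congr rfl fun k _ => ?_
      simp only [iterDeriv_cmul]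
      rw [expand x c m (fun i => fun y => f i y * g i y ^ k i)
        (fun i => (hfg k i).of_le hmn)]
    rw [hPsi] at hexp
    rw [hvan] at hexp
    calc ∑ u ∈ piAntidiag (univ : Finset (Fin r)) m,
          ((Nat.multinomial univ u : ℝ) * T u) * ∏ i, c i ^ u i
        = ∑ u ∈ piAntidiag (univ : Finset (Fin r)) m,
            ∑ k ∈ piAntidiag (univ : Finset (Fin r)) n, (Nat.multinomial univ k : ℝ) *
              ((Nat.multinomial univ u : ℝ) *
                ∏ i, (c i ^ u i * iteratedDeriv (u i) (fun t => f i t * g i t ^ k i) x)) := by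
          refine Finset.sum_congr rfl fun u _ => ?_
          simp only [hT]
          rw [Finset.mul_sum, Finset.sum_mul]
          refine Finset.sum_congr rfl fun k _ => ?_
          rw [Finset.prod_mul_distrib]
          ring
      _ = ∑ k ∈ piAntidiag (univ : Finset (Fin r)) n,
            ∑ u ∈ piAntidiag (univ : Finset (Fin r)) m, (Nat.multinomial univ k : ℝ) *
              ((Nat.multinomial univ u : ℝ) *
                ∏ i, (c i ^ u i * iteratedDeriv (u i) (fun t => f i t * g i t ^ k i) x)) :=
          Finset.sum_comm
      _ = ∑ k ∈ piAntidiag (univ : Finset (Fin r)) n, (Nat.multinomial univ k : ℝ) *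
            ∑ u ∈ piAntidiag (univ : Finset (Fin r)) m, (Nat.multinomial univ u : ℝ) *
              ∏ i, (c i ^ u i * iteratedDeriv (u i) (fun t => f i t * g i t ^ k i) x) := by
          refine Finset.sum_congr rfl fun k _ => ?_
          rw [Finset.mul_sum]
      _ = 0 := hexp.symm
  -- Step 2: polynomial coefficient extraction
  set P : MvPolynomial (Fin r) ℝ :=
    ∑ u ∈ piAntidiag (univ : Finset (Fin r)) m,
      MvPolynomial.monomial (Finsupp.equivFunOnFinite.symm u)
        ((Nat.multinomial univ u : ℝ) * T u) with hP
  have hPeval : ∀ c : Fin r → ℝ, MvPolynomial.eval c P = 0 := by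
    intro c
    rw [hP, map_sum]
    have e1 : ∀ u ∈ piAntidiag (univ : Finset (Fin r)) m,
        MvPolynomial.eval c (MvPolynomial.monomial (Finsupp.equivFunOnFinite.symm u)
          ((Nat.multinomial univ u : ℝ) * T u))
        = ((Nat.multinomial univ u : ℝ) * T u) * ∏ i, c i ^ u i := by
      intro u _
      rw [MvPolynomial.eval_monomial]
      congr 1
      rw [Finsupp.prod_fintype _ _ (fun i => pow_zero (c i))]
      simp
    rw [Finset.sum_congr rfl e1]
    exact hE c
  have hP0 : P = 0 := by
    apply MvPolynomial.funext
    intro c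
    rw [hPeval c, map_zero]
  have hsmem : s ∈ piAntidiag (univ : Finset (Fin r)) m := by
    rw [Finset.mem_piAntidiag]
    exact ⟨hm.symm, fun i _ => mem_univ i⟩
  have hcoeff : MvPolynomial.coeff (Finsupp.equivFunOnFinite.symm s) P
      = (Nat.multinomial univ s : ℝ) * T s := by
    rw [hP, MvPolynomial.coeff_sum]
    rw [Finset.sum_eq_single_of_mem s hsmem]
    · rw [MvPolynomial.coeff_monomial, if_pos rfl]
    · intro u _ hus
      rw [MvPolynomial.coeff_monomial, if_neg]
      intro hc
      exact hus (by simpa using hc)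
  rw [hP0] at hcoeff
  simp only [MvPolynomial.coeff_zero] at hcoeff
  have hmult : ((Nat.multinomial univ s : ℝ)) ≠ 0 := by
    exact_mod_cast (Nat.multinomial_pos univ s).ne'
  have hTs : T s = 0 := by
    rcases mul_eq_zero.mp hcoeff.symm with h | h
    · exact absurd h hmult
    · exact h
  rw [← Finset.piAntidiag_univ_fin_eq_antidiagonalTuple]
  exact hTs
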